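/- Under the contour representation of the interpolation error, one has the uniform bound ‖f − r‖_{∞,[δ,T]} ≤ D · sup_{z∈C} |Σ_i λ_i/(z−x_i)| / min_{x∈[δ,T]} |Σ_i λ_i/(x−x_i)|, where D = length(C)·max_{z∈C}|f(z)| / (2π·dist([δ,T],C)), provided the denominator Σ_i λ_i/(x−x_i) does not vanish on [δ,T]. -/

import Mathlib

set_option maxHeartbeats 1000000

open Complex Metric Real

/-- Circle integral of a finite sum. -/
theorem circleIntegral_finset_sum {ι : Type*} (s : Finset ι) (c : ℂ) (R : ℝ)
    (g : ι → ℂ → ℂ) (h : ∀ i ∈ s, CircleIntegrable (g i) c R) :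
    (∮ z in C(c, R), ∑ i ∈ s, g i z) = ∑ i ∈ s, ∮ z in C(c, R), g i z := by
  simp only [circleIntegral, Finset.smul_sum]
  exact intervalIntegral.integral_finset_sum fun i hi => (h i hi).out

/-- Uniform bound on the interpolation error from the contour representation. -/
theorem contour_error_bound (N : ℕ) (δ T : ℝ) (hδT : δ < T)
    (x : Fin (N+1) → ℝ) (hx : Function.Injective x) (hxin : ∀ i, x i ∈ Set.Icc δ T)
    (l : Fin (N+1) → ℝ) (hl : ∀ i, l i ≠ 0)
    (c : ℂ) (R : ℝ) (hR : 0 < R)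
    (hsub : ∀ a ∈ Set.Icc δ T, (a : ℂ) ∈ Metric.ball c R)
    (f : ℂ → ℂ) (hf : DifferentiableOn ℂ f (Metric.closedBall c R))
    (M S m d : ℝ) (hm : 0 < m) (hd : 0 < d)
    (hM : ∀ z ∈ Metric.sphere c R, ‖f z‖ ≤ M)
    (hS : ∀ z ∈ Metric.sphere c R, ‖∑ i, (l i : ℂ) / (z - (x i : ℂ))‖ ≤ S)
    (hdist : ∀ a ∈ Set.Icc δ T, ∀ z ∈ Metric.sphere c R, d ≤ dist (a : ℂ) z)
    (hmin : ∀ a ∈ Set.Icc δ T, (∀ i, a ≠ x i) →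
      m ≤ ‖∑ i, (l i : ℂ) / ((a : ℂ) - (x i : ℂ))‖) :
    ∀ t ∈ Set.Icc δ T, (∀ i, t ≠ x i) →
      ‖f t - (∑ i, (l i : ℂ) * f (x i) / ((t : ℂ) - (x i : ℂ))) /
          (∑ i, (l i : ℂ) / ((t : ℂ) - (x i : ℂ)))‖
        ≤ ((2 * Real.pi * R) * M / (2 * Real.pi * d)) * (S / m) := by
  intro t ht htx
  have hπ : (0:ℝ) < Real.pi := Real.pi_pos
  -- abbreviations
  set st : ℂ := ∑ i, (l i : ℂ) / ((t : ℂ) - (x i : ℂ)) with hst_def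
  set Nt : ℂ := ∑ i, (l i : ℂ) * f (x i) / ((t : ℂ) - (x i : ℂ)) with hNt_def
  have hmt : m ≤ ‖st‖ := hmin t ht htx
  have hst0 : st ≠ 0 := by
    intro h; rw [h, norm_zero] at hmt; linarith
  -- points are in the ball
  have htball : (t : ℂ) ∈ Metric.ball c R := hsub t ht
  have hxball : ∀ i, ((x i : ℝ) : ℂ) ∈ Metric.ball c R := fun i => hsub (x i) (hxin i)
  have hfc : ContinuousOn f (Metric.closedBall c R) := hf.continuousOn
  have hdiff : ∀ z ∈ Metric.ball c R \ (∅ : Set ℂ), DifferentiableAt ℂ f z := by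
    intro z hz
    exact hf.differentiableAt (Metric.closedBall_mem_nhds_of_mem hz.1)
  -- Cauchy integral formulas
  have hA : (∮ z in C(c, R), f z / (z - (t:ℂ))) = 2 * Real.pi * Complex.I * f t :=
    Complex.circleIntegral_div_sub_of_differentiable_on_off_countable
      Set.countable_empty htball hfc hdiff
  have hB : ∀ i, (∮ z in C(c, R), f z / (z - ((x i : ℝ):ℂ)))
      = 2 * Real.pi * Complex.I * f (x i) := fun i =>
    Complex.circleIntegral_div_sub_of_differentiable_on_off_countable
      Set.countable_empty (hxball i) hfc hdiff
  -- nonvanishing on the sphere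
  have hzt : ∀ z ∈ Metric.sphere c R, z - (t:ℂ) ≠ 0 := by
    intro z hz
    have := hdist t ht z hz
    have : (t:ℂ) ≠ z := by
      intro h; rw [h, dist_self] at this; linarith
    exact sub_ne_zero.2 (Ne.symm this)
  have hzx : ∀ i, ∀ z ∈ Metric.sphere c R, z - ((x i:ℝ):ℂ) ≠ 0 := by
    intro i z hz
    have := hdist (x i) (hxin i) z hz
    have : ((x i:ℝ):ℂ) ≠ z := by
      intro h; rw [h, dist_self] at this; linarith
    exact sub_ne_zero.2 (Ne.symm this)
  have htxC : ∀ i, (t:ℂ) - ((x i:ℝ):ℂ) ≠ 0 := by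
    intro i
    exact sub_ne_zero.2 (fun h => htx i (by exact_mod_cast h))
  -- integrability of the pieces
  have hfcs : ContinuousOn f (Metric.sphere c R) :=
    hfc.mono Metric.sphere_subset_closedBall
  have hint_t : CircleIntegrable (fun z => f z / (z - (t:ℂ))) c R := by
    apply ContinuousOn.circleIntegrable hR.le
    exact hfcs.div (continuousOn_id.sub continuousOn_const) hzt
  have hint_x : ∀ i, CircleIntegrable (fun z => f z / (z - ((x i:ℝ):ℂ))) c R := by
    intro i
    apply ContinuousOn.circleIntegrable hR.le
    exact hfcs.div (continuousOn_id.sub continuousOn_const) (hzx i)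
  -- the main integral
  set I0 : ℂ := ∮ z in C(c, R), f z * (∑ i, (l i : ℂ) / (z - ((x i:ℝ):ℂ))) / (z - (t:ℂ))
    with hI0_def
  -- partial fraction decomposition of the integrand on the sphere
  have hI0 : I0 = ∑ i, ((l i : ℂ) / ((t:ℂ) - ((x i:ℝ):ℂ))) *
      ((2 * Real.pi * Complex.I * f t) - (2 * Real.pi * Complex.I * f (x i))) := by
    have heq : Set.EqOn
        (fun z => f z * (∑ i, (l i : ℂ) / (z - ((x i:ℝ):ℂ))) / (z - (t:ℂ)))
        (fun z => ∑ i, ((l i : ℂ) / ((t:ℂ) - ((x i:ℝ):ℂ))) •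
          (f z / (z - (t:ℂ)) - f z / (z - ((x i:ℝ):ℂ))))
        (Metric.sphere c R) := by
      intro z hz
      simp only [smul_eq_mul, Finset.mul_sum, Finset.sum_div]
      refine Finset.sum_congr rfl fun i _ => ?_
      have h1 := hzt z hz
      have h2 := hzx i z hz
      have h3 := htxC i
      field_simp
      ring
    have hint_i : ∀ i : Fin (N+1), CircleIntegrable
        (fun z => ((l i : ℂ) / ((t:ℂ) - ((x i:ℝ):ℂ))) •
          (f z / (z - (t:ℂ)) - f z / (z - ((x i:ℝ):ℂ)))) c R := by
      intro i
      apply ContinuousOn.circleIntegrable hR.le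
      exact (continuousOn_const : ContinuousOn (fun _ : ℂ => ((l i : ℂ) / ((t:ℂ) - ((x i:ℝ):ℂ)))) (Metric.sphere c R)).smul
        ((hfcs.div (continuousOn_id.sub continuousOn_const) hzt).sub
         (hfcs.div (continuousOn_id.sub continuousOn_const) (hzx i)))
    have hsum := circleIntegral_finset_sum (Finset.univ) c R
      (fun i z => ((l i : ℂ) / ((t:ℂ) - ((x i:ℝ):ℂ))) •
        (f z / (z - (t:ℂ)) - f z / (z - ((x i:ℝ):ℂ)))) (fun i _ => hint_i i)
    rw [hI0_def, circleIntegral.integral_congr hR.le heq, hsum]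
    refine Finset.sum_congr rfl fun i _ => ?_
    rw [circleIntegral.integral_smul ((l i : ℂ) / ((t:ℂ) - ((x i:ℝ):ℂ)))
        (fun z => f z / (z - (t:ℂ)) - f z / (z - ((x i:ℝ):ℂ))) c R,
      circleIntegral.integral_sub hint_t (hint_x i), hA, hB, smul_eq_mul]
  -- hence I0 = 2πi (f t * st - Nt)
  have hI0' : I0 = 2 * Real.pi * Complex.I * (f t * st - Nt) := by
    rw [hI0, hst_def, hNt_def]
    simp only [Finset.mul_sum, mul_sub, ← Finset.sum_sub_distrib]
    refine Finset.sum_congr rfl fun i _ => ?_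
    have h3 := htxC i
    field_simp
  -- the error equals I0 / (2πi st)
  have herr : f t - Nt / st = I0 / (2 * Real.pi * Complex.I * st) := by
    rw [hI0']
    have h2πI : (2 * (Real.pi:ℂ) * Complex.I) ≠ 0 := by
      simp [Complex.I_ne_zero, Real.pi_ne_zero]
    field_simp
  -- bound the integral
  have hMnn : 0 ≤ M := by
    have : c + R ∈ Metric.sphere c R := by
      simp [Complex.dist_eq, abs_of_pos hR]
    exact le_trans (norm_nonneg _) (hM _ this)
  have hSnn : 0 ≤ S := by
    have : c + R ∈ Metric.sphere c R := by
      simp [Complex.dist_eq, abs_of_pos hR]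
    exact le_trans (norm_nonneg _) (hS _ this)
  have hI0bound : ‖I0‖ ≤ 2 * Real.pi * R * (M * S / d) := by
    have := circleIntegral.norm_integral_le_of_norm_le_const (c := c) (R := R)
      (C := M * S / d) hR.le (f := fun z =>
        f z * (∑ i, (l i : ℂ) / (z - ((x i:ℝ):ℂ))) / (z - (t:ℂ))) ?_
    · rw [hI0_def]; simpa [abs_of_pos hR] using this
    · intro z hz
      have hzt' : d ≤ ‖z - (t:ℂ)‖ := by
        have := hdist t ht z hz
        rwa [dist_eq_norm, norm_sub_rev] at this
      rw [norm_div, norm_mul]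
      apply div_le_div₀ (by positivity)
        (mul_le_mul (hM z hz) (hS z hz) (norm_nonneg _) hMnn) hd hzt'
  -- put everything together
  have hnorm : ‖f t - Nt / st‖ = ‖I0‖ / (2 * Real.pi * ‖st‖) := by
    rw [herr, norm_div, norm_mul, norm_mul, Complex.norm_I, mul_one]
    norm_num [Complex.norm_real, abs_of_pos hπ]
  rw [hnorm]
  have step1 : ‖I0‖ / (2 * Real.pi * ‖st‖) ≤ ‖I0‖ / (2 * Real.pi * m) := by
    apply div_le_div_of_nonneg_left (norm_nonneg _) (by positivity)
    have : (0:ℝ) < 2 * Real.pi := by positivity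
    nlinarith
  have step2 : ‖I0‖ / (2 * Real.pi * m) ≤ (2 * Real.pi * R * (M * S / d)) / (2 * Real.pi * m) :=
    div_le_div_of_nonneg_right hI0bound (by positivity)
  have heqfinal : (2 * Real.pi * R * (M * S / d)) / (2 * Real.pi * m)
      = ((2 * Real.pi * R) * M / (2 * Real.pi * d)) * (S / m) := by
    field_simp
  linarith [step1, step2, heqfinal.le, heqfinal.ge]
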